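/- Let g, h, u, α₁, α₂ be real numbers. The 4×4 real matrix A = ![![0, 1, 0, 0], ![−u^2 + g*h − α₁^2/3 − α₂^2/5, 2*u, 2*α₁/3, 2*α₂/5], ![−2*u*α₁, 2*α₁, u, 0], ![−2*u*α₂, 2*α₂, 0, u]] (the system matrix of the second-order shallow water linearized moment equations SWLME2) has characteristic polynomial (X − u)^2 * ((X − u)^2 − (g*h + α₁^2 + (3/5)*α₂^2)); in particular, when h > 0 and g > 0 all its eigenvalues are real for every choice of α₁, α₂, namely u (double) and u ± √(g h + α₁^2 + (3/5) α₂^2). -/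

import Mathlib

open Polynomial

/-- The system matrix of the second-order shallow water linearized moment
equations (SWLME2) has characteristic polynomial
`(X - u)² ((X - u)² - (g h + α₁² + (3/5) α₂²))`; in particular, when `h > 0`
and `g > 0` all its eigenvalues are real for every `α₁, α₂`, namely `u`
(double) and `u ± √(g h + α₁² + (3/5) α₂²)`. -/
theorem swlme2_system_matrix_charpoly (g h u α₁ α₂ : ℝ) :
    (!![0, 1, 0, 0;
        -u ^ 2 + g * h - α₁ ^ 2 / 3 - α₂ ^ 2 / 5, 2 * u, 2 * α₁ / 3, 2 * α₂ / 5;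
        -2 * u * α₁, 2 * α₁, u, 0;
        -2 * u * α₂, 2 * α₂, 0, u] : Matrix (Fin 4) (Fin 4) ℝ).charpoly
      = (X - C u) ^ 2 * ((X - C u) ^ 2 - C (g * h + α₁ ^ 2 + (3 / 5) * α₂ ^ 2)) ∧
    (0 < h → 0 < g →
      (!![0, 1, 0, 0;
          -u ^ 2 + g * h - α₁ ^ 2 / 3 - α₂ ^ 2 / 5, 2 * u, 2 * α₁ / 3, 2 * α₂ / 5;
          -2 * u * α₁, 2 * α₁, u, 0;
          -2 * u * α₂, 2 * α₂, 0, u] : Matrix (Fin 4) (Fin 4) ℝ).charpoly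
        = (X - C u) ^ 2
          * (X - C (u + Real.sqrt (g * h + α₁ ^ 2 + (3 / 5) * α₂ ^ 2)))
          * (X - C (u - Real.sqrt (g * h + α₁ ^ 2 + (3 / 5) * α₂ ^ 2)))) := by
  have key :
      (!![0, 1, 0, 0;
          -u ^ 2 + g * h - α₁ ^ 2 / 3 - α₂ ^ 2 / 5, 2 * u, 2 * α₁ / 3, 2 * α₂ / 5;
          -2 * u * α₁, 2 * α₁, u, 0;
          -2 * u * α₂, 2 * α₂, 0, u] : Matrix (Fin 4) (Fin 4) ℝ).charpoly
        = (X - C u) ^ 2 * ((X - C u) ^ 2 - C (g * h + α₁ ^ 2 + (3 / 5) * α₂ ^ 2)) := by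
    rw [Matrix.charpoly]
    simp [Matrix.det_succ_row_zero, Fin.sum_univ_succ, Matrix.charmatrix_apply,
      Matrix.one_apply, Matrix.submatrix_apply, Fin.succAbove]
    apply Polynomial.funext
    intro x
    simp
    ring
  refine ⟨key, fun hh hg => ?_⟩
  rw [key]
  have hv : (0:ℝ) ≤ g * h + α₁ ^ 2 + (3 / 5) * α₂ ^ 2 := by positivity
  have hs : Real.sqrt (g * h + α₁ ^ 2 + (3 / 5) * α₂ ^ 2) ^ 2
      = g * h + α₁ ^ 2 + (3 / 5) * α₂ ^ 2 := Real.sq_sqrt hv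
  apply Polynomial.funext
  intro x
  simp only [eval_mul, eval_sub, eval_pow, eval_add, eval_X, eval_C]
  linear_combination ((x - u) ^ 2) * hs
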